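/- Let P > 0, write p̄ = P/(1+P), and define M_P(r,t) = (1−p̄)^{t+1} · Σ_{k=1}^{r} C(t+r−k, r−k) · p̄^{r−k} for integers r ≥ 1, t ≥ 0. Then for every real v with 0 < v < P and every integer r ≥ 1, M_P(r, ⌊r/v⌋) ≤ r · exp( −(r/v − 1) · (1+v) · D(v/(1+v) ‖ p̄) ). -/

import Mathlib

lemma aux_mono (v : ℝ) (hv : 1 ≤ v) (P : ℝ) (hvP : v ≤ P) :
    v * Real.log (1+v) - (v-1) * Real.log v ≤ v * Real.log (1+P) - (v-1) * Real.log P := by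
  have hv0 : (0:ℝ) < v := by linarith
  have hmono : MonotoneOn (fun t : ℝ => v * Real.log (1+t) - (v-1) * Real.log t)
      (Set.Ici v) := by
    have hderiv : ∀ t ∈ interior (Set.Ici v),
        HasDerivWithinAt (fun t : ℝ => v * Real.log (1+t) - (v-1) * Real.log t)
          (v * (1+t)⁻¹ - (v-1) * t⁻¹) (interior (Set.Ici v)) t := by
      intro t ht
      rw [interior_Ici] at ht
      have ht0 : (0:ℝ) < t := lt_trans hv0 ht
      have h1 : HasDerivAt (fun t : ℝ => Real.log (1+t)) (1+t)⁻¹ t := by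
        have := (Real.hasDerivAt_log (by positivity : (1:ℝ)+t ≠ 0)).comp t
          ((hasDerivAt_id t).const_add 1)
        simpa [Function.comp_def] using this
      have h2 : HasDerivAt Real.log t⁻¹ t := Real.hasDerivAt_log ht0.ne'
      exact ((h1.const_mul v).sub (h2.const_mul (v-1))).hasDerivWithinAt
    refine monotoneOn_of_hasDerivWithinAt_nonneg (convex_Ici v) ?_ hderiv ?_
    · apply ContinuousOn.sub
      · exact continuousOn_const.mul ((Real.continuousOn_log.comp
          (continuousOn_const.add continuousOn_id) (fun t ht => by
            simp only [Set.mem_Ici] at ht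
            simp only [Set.mem_compl_iff, Set.mem_singleton_iff]
            intro h; nlinarith)))
      · exact continuousOn_const.mul (Real.continuousOn_log.mono (fun t ht => by
          simp only [Set.mem_Ici] at ht
          simp only [Set.mem_compl_iff, Set.mem_singleton_iff]
          intro h; nlinarith))
    · intro t ht
      rw [interior_Ici] at ht
      have ht0 : (0:ℝ) < t := lt_trans hv0 ht
      have h1t : (0:ℝ) < 1 + t := by linarith
      have h : (v-1)/t ≤ v/(1+t) := by
        have htv : v < t := ht
        rw [div_le_div_iff₀ ht0 h1t]; nlinarith
      simpa [div_eq_mul_inv, sub_nonneg] using h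
  exact hmono (Set.mem_Ici.mpr le_rfl) hvP hvP

lemma aux_binom (n k : ℕ) (x : ℝ) (hx0 : 0 ≤ x) (hx1 : x ≤ 1) (hk : k ≤ n) :
    (n.choose k : ℝ) * x ^ k * (1 - x) ^ (n - k) ≤ 1 := by
  have h := add_pow x (1 - x) n
  rw [show x + (1 - x) = 1 by ring, one_pow] at h
  have hle : x ^ k * (1 - x) ^ (n - k) * (n.choose k : ℝ) ≤
      ∑ i ∈ Finset.range (n + 1), x ^ i * (1 - x) ^ (n - i) * (n.choose i : ℝ) := by
    apply Finset.single_le_sum (f := fun i => x ^ i * (1 - x) ^ (n - i) * (n.choose i : ℝ))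
    · intro i _
      have h1 : (0:ℝ) ≤ 1 - x := by linarith
      positivity
    · exact Finset.mem_range.mpr (by omega)
  rw [← h] at hle
  linarith

lemma aux_arith (v rr tt A B : ℝ) (hA : 0 ≤ A) (hB : 0 ≤ B)
    (hfl : rr / v < tt + 1) (hkey : 1 < v → (v - 1) * B ≤ A) :
    (rr - 1) * B + (tt + 1) * (-A) ≤ (rr - v) * B - (rr / v - 1) * A := by
  rcases le_or_gt v 1 with h | h
  · nlinarith [mul_nonneg hA (show (0:ℝ) ≤ tt + 2 - rr / v by linarith),
      mul_nonpos_of_nonpos_of_nonneg (show v - 1 ≤ (0:ℝ) by linarith) hB]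
  · have h1 := hkey h
    have h2 : A ≤ (tt + 2 - rr / v) * A := le_mul_of_one_le_left hA (by linarith)
    nlinarith [h1, h2]

/-- The binary Kullback–Leibler divergence `D(q‖p)` (natural logarithms). -/
noncomputable def klBin (q p : ℝ) : ℝ :=
  q * Real.log (q / p) + (1 - q) * Real.log ((1 - q) / (1 - p))

/-- The explicit single-sample MSE `M_P(r,t)` of the linear scheme with SNR `P`. -/
noncomputable def MP (P : ℝ) (r t : ℕ) : ℝ :=
  (1 - P / (1 + P)) ^ (t + 1) *
    ∑ k ∈ Finset.Icc 1 r, (Nat.choose (t + r - k) (r - k) : ℝ) * (P / (1 + P)) ^ (r - k)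

/-- non-asymptotic single-sample MSE bound from the proof of Theorem 1.
For `P > 0`, `0 < v < P`, and every integer `r ≥ 1`:
`M_P(r, ⌊r/v⌋) ≤ r · exp( −(r/v − 1)·(1+v)·D(v/(1+v) ‖ p̄) )`. -/
theorem stmt5 (P : ℝ) (hP : 0 < P) (v : ℝ) (hv0 : 0 < v) (hvP : v < P)
    (r : ℕ) (hr : 1 ≤ r) :
    MP P r ⌊(r : ℝ) / v⌋₊ ≤
      (r : ℝ) * Real.exp (-((r : ℝ) / v - 1) * (1 + v) * klBin (v / (1 + v)) (P / (1 + P))) := by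
  have h1P : (0:ℝ) < 1 + P := by linarith
  have h1v : (0:ℝ) < 1 + v := by linarith
  set p : ℝ := P / (1 + P) with hp_def
  set x : ℝ := v / (1 + v) with hx_def
  set t : ℕ := ⌊(r : ℝ) / v⌋₊ with ht_def
  clear_value p x t
  have hp0 : 0 < p := by rw [hp_def]; positivity
  have hp1 : p < 1 := by rw [hp_def, div_lt_one h1P]; linarith
  have hx0 : 0 < x := by rw [hx_def]; positivity
  have hx1 : x < 1 := by rw [hx_def, div_lt_one h1v]; linarith
  have hxp : x < p := by
    rw [hx_def, hp_def, div_lt_div_iff₀ h1v h1P]; nlinarith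
  have h1p0 : (0:ℝ) < 1 - p := by linarith
  have h1x0 : (0:ℝ) < 1 - x := by linarith
  have hpx1 : (1:ℝ) ≤ p / x := (one_le_div hx0).mpr hxp.le
  set Q : ℝ := (p / x) ^ (r - 1) * ((1 - p) / (1 - x)) ^ (t + 1) with hQ_def
  have hQ0 : 0 < Q := by positivity
  -- Step 1: MP ≤ r * Q
  have step1 : MP P r t ≤ (r : ℝ) * Q := by
    rw [MP, ← hp_def, Finset.mul_sum]
    have hterm : ∀ k ∈ Finset.Icc 1 r,
        (1 - p) ^ (t + 1) * (((t + r - k).choose (r - k) : ℝ) * p ^ (r - k)) ≤ Q := by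
      intro k hk
      rw [Finset.mem_Icc] at hk
      set j : ℕ := r - k with hj_def
      have hjr : j ≤ r - 1 := by omega
      have htj : t + r - k = t + j := by omega
      rw [htj]
      have hbin : ((t + j).choose j : ℝ) * x ^ j * (1 - x) ^ t ≤ 1 := by
        have := aux_binom (t + j) j x hx0.le hx1.le (by omega)
        rwa [Nat.add_sub_cancel] at this
      have hbinpos : (0:ℝ) ≤ (p / x) ^ j * ((1 - p) / (1 - x)) ^ t * (1 - p) := by positivity
      have e1 : (p / x) ^ j * x ^ j = p ^ j := by
        rw [← mul_pow, div_mul_cancel₀ _ hx0.ne']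
      have e2 : ((1 - p) / (1 - x)) ^ t * (1 - x) ^ t = (1 - p) ^ t := by
        rw [← mul_pow, div_mul_cancel₀ _ h1x0.ne']
      calc (1 - p) ^ (t + 1) * (((t + j).choose j : ℝ) * p ^ j)
          = (((t + j).choose j : ℝ) * x ^ j * (1 - x) ^ t) *
            ((p / x) ^ j * ((1 - p) / (1 - x)) ^ t * (1 - p)) := by
            rw [pow_succ, ← e1, ← e2]
            ring
        _ ≤ 1 * ((p / x) ^ j * ((1 - p) / (1 - x)) ^ t * (1 - p)) :=
            by nlinarith [mul_nonneg (sub_nonneg.mpr hbin) hbinpos]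
        _ = (p / x) ^ j * ((1 - p) / (1 - x)) ^ t * (1 - p) := one_mul _
        _ ≤ (p / x) ^ (r - 1) * ((1 - p) / (1 - x)) ^ t * ((1 - p) / (1 - x)) := by
            apply mul_le_mul
            · exact mul_le_mul_of_nonneg_right (pow_le_pow_right₀ hpx1 hjr) (by positivity)
            · rw [le_div_iff₀ h1x0]
              nlinarith [mul_nonneg h1p0.le hx0.le]
            · linarith
            · positivity
        _ = Q := by rw [hQ_def, pow_succ]; ring
    calc ∑ k ∈ Finset.Icc 1 r,
          (1 - p) ^ (t + 1) * (((t + r - k).choose (r - k) : ℝ) * p ^ (r - k))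
        ≤ ∑ _k ∈ Finset.Icc 1 r, Q := Finset.sum_le_sum hterm
      _ = (r : ℝ) * Q := by
          rw [Finset.sum_const, Nat.card_Icc]
          simp [nsmul_eq_mul]
  -- Step 2: Q ≤ exp(E)
  have step2 : Q ≤ Real.exp (-((r : ℝ) / v - 1) * (1 + v) * klBin x p) := by
    rw [← Real.exp_log hQ0, Real.exp_le_exp]
    have hlogQ : Real.log Q = ((r : ℝ) - 1) * Real.log (p / x) +
        ((t : ℝ) + 1) * Real.log ((1 - p) / (1 - x)) := by
      rw [hQ_def, Real.log_mul (by positivity) (by positivity), Real.log_pow, Real.log_pow]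
      have : ((r - 1 : ℕ) : ℝ) = (r : ℝ) - 1 := by
        rw [Nat.cast_sub hr]; norm_num
      rw [this]
      push_cast
      ring
    rw [hlogQ]
    set A : ℝ := Real.log (1 - x) - Real.log (1 - p) with hA_def
    set B : ℝ := Real.log p - Real.log x with hB_def
    clear_value A B
    have hlpx : Real.log (p / x) = B := by rw [hB_def]; exact Real.log_div hp0.ne' hx0.ne'
    have hl1px : Real.log ((1 - p) / (1 - x)) = -A := by
      rw [Real.log_div h1p0.ne' h1x0.ne', hA_def]; ring
    have hA : 0 ≤ A := by rw [hA_def]; exact sub_nonneg.mpr (Real.log_le_log h1p0 (by linarith))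
    have hB : 0 ≤ B := by rw [hB_def]; exact sub_nonneg.mpr (Real.log_le_log hx0 hxp.le)
    have hfl : (r : ℝ) / v < (t : ℝ) + 1 := by
      rw [ht_def]
      have := Nat.lt_floor_add_one ((r : ℝ) / v)
      exact_mod_cast this
    have hlogp : Real.log p = Real.log P - Real.log (1 + P) := by
      rw [hp_def]; exact Real.log_div hP.ne' h1P.ne'
    have hlogx : Real.log x = Real.log v - Real.log (1 + v) := by
      rw [hx_def]; exact Real.log_div hv0.ne' h1v.ne'
    have hlog1p : Real.log (1 - p) = -Real.log (1 + P) := by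
      rw [show (1:ℝ) - p = (1 + P)⁻¹ by rw [hp_def]; field_simp; ring, Real.log_inv]
    have hlog1x : Real.log (1 - x) = -Real.log (1 + v) := by
      rw [show (1:ℝ) - x = (1 + v)⁻¹ by rw [hx_def]; field_simp; ring, Real.log_inv]
    have hkey : 1 < v → (v - 1) * B ≤ A := by
      intro h
      have k := aux_mono v h.le P hvP.le
      rw [hB_def, hA_def, hlogp, hlogx, hlog1p, hlog1x]
      nlinarith [k]
    have hxv : (1 + v) * x = v := by
      rw [hx_def]; field_simp
    have h1xv : (1 + v) * (1 - x) = 1 := by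
      rw [hx_def]; field_simp; ring
    have hrv : ((r : ℝ) / v) * v = (r : ℝ) := div_mul_cancel₀ _ hv0.ne'
    have hRHS : -((r : ℝ) / v - 1) * (1 + v) * klBin x p =
        ((r : ℝ) - v) * B - ((r : ℝ) / v - 1) * A := by
      rw [klBin, Real.log_div hx0.ne' hp0.ne', Real.log_div h1x0.ne' h1p0.ne',
        hB_def, hA_def]
      linear_combination (-(((r : ℝ) / v) - 1) * (Real.log x - Real.log p)) * hxv +
        (-(((r : ℝ) / v) - 1) * (Real.log (1 - x) - Real.log (1 - p))) * h1xv +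
        (Real.log p - Real.log x) * hrv
    rw [hlpx, hl1px, hRHS]
    exact aux_arith v (r : ℝ) (t : ℝ) A B hA hB hfl hkey
  calc MP P r t ≤ (r : ℝ) * Q := step1
    _ ≤ (r : ℝ) * Real.exp (-((r : ℝ) / v - 1) * (1 + v) * klBin x p) :=
        mul_le_mul_of_nonneg_left step2 (Nat.cast_nonneg r)
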